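/- Let X ⊆ ℝⁿ and β ∈ (0,1), and suppose for every w ∈ X that L(w,·) is measurable and μ-integrable and Φ(w,·) is continuous. Then minimizing CVaR over X is equivalent to jointly minimizing F_β over X × ℝ: inf_{w ∈ X} φ_β(w) = inf_{(w,α) ∈ X × ℝ} F_β(w,α). -/

import Mathlib

open MeasureTheory Filter Topology

section CVaRHelpers

variable {Ω : Type*} [MeasurableSpace Ω]

lemma sInf_eq_of_subset_of_dominates (A B : Set ℝ) (hAB : A ⊆ B)
    (h : ∀ b ∈ B, ∃ a ∈ A, a ≤ b) : sInf A = sInf B := by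
  rcases A.eq_empty_or_nonempty with hA | hA
  · have hB : B = ∅ := by
      ext b
      simp only [Set.mem_empty_iff_false, iff_false]
      intro hb
      obtain ⟨a, haA, -⟩ := h b hb
      simp [hA] at haA
    rw [hA, hB]
  by_cases hbdd : BddBelow A
  · have hBb : BddBelow B := by
      obtain ⟨m, hm⟩ := hbdd
      exact ⟨m, fun b hb => by
        obtain ⟨a, haA, hab⟩ := h b hb; exact le_trans (hm haA) hab⟩
    refine le_antisymm (le_csInf (hA.mono hAB) fun b hb => ?_) (csInf_le_csInf hBb hA hAB)
    obtain ⟨a, haA, hab⟩ := h b hb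
    exact le_trans (csInf_le hbdd haA) hab
  · have hBb : ¬ BddBelow B := fun ⟨m, hm⟩ => hbdd ⟨m, fun a ha => hm (hAB ha)⟩
    rw [Real.sInf_of_not_bddBelow hbdd, Real.sInf_of_not_bddBelow hBb]

/-- Measure of the upper tail at the VaR level. -/
lemma var_tail_measure (μ : Measure Ω) [IsProbabilityMeasure μ] (f : Ω → ℝ) (β : ℝ)
    (hβ : β ∈ Set.Ioo (0:ℝ) 1) (hf : Measurable f)
    (hc : Continuous (fun a : ℝ => (μ {r | f r ≤ a}).toReal)) :
    (μ {r | sInf {a : ℝ | β ≤ (μ {r' | f r' ≤ a}).toReal} ≤ f r}).toReal = 1 - β := by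
  set Φ : ℝ → ℝ := fun a => (μ {r | f r ≤ a}).toReal with hΦ
  set S : Set ℝ := {a : ℝ | β ≤ Φ a} with hSdef
  set α0 : ℝ := sInf S with hα0
  have hΦmono : Monotone Φ := fun a b hab =>
    ENNReal.toReal_mono (measure_ne_top μ _) (measure_mono fun r hr => le_trans hr hab)
  -- S nonempty
  have hS_ne : S.Nonempty := by
    have hmono : Monotone (fun k : ℕ => {r : Ω | f r ≤ (k:ℝ)}) := by
      intro i j hij r hr
      simp only [Set.mem_setOf_eq] at hr ⊢
      exact le_trans hr (by exact_mod_cast hij)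
    have h1 := tendsto_measure_iUnion_atTop (μ := μ) hmono
    have hU : (⋃ k : ℕ, {r | f r ≤ (k:ℝ)}) = Set.univ := by
      ext r
      simp only [Set.mem_iUnion, Set.mem_setOf_eq, Set.mem_univ, iff_true]
      exact exists_nat_ge (f r)
    rw [hU, measure_univ] at h1
    have h2 : Tendsto (fun k : ℕ => Φ k) atTop (𝓝 1) := by
      have h3 := (ENNReal.tendsto_toReal (by norm_num : (1:ENNReal) ≠ ⊤)).comp h1
      exact h3
    obtain ⟨k, hk⟩ := (h2.eventually (eventually_ge_nhds hβ.2)).exists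
    exact ⟨k, hk⟩
  -- S bounded below
  have hS_bdd : BddBelow S := by
    have hanti : Antitone (fun k : ℕ => {r : Ω | f r ≤ -(k:ℝ)}) := by
      intro i j hij r hr
      simp only [Set.mem_setOf_eq] at hr ⊢
      have : (i:ℝ) ≤ j := by exact_mod_cast hij
      linarith
    have h1 := tendsto_measure_iInter_atTop (μ := μ) (s := fun k : ℕ => {r : Ω | f r ≤ -(k:ℝ)})
      (fun k => (hf measurableSet_Iic).nullMeasurableSet) hanti ⟨0, measure_ne_top μ _⟩
    have hI : (⋂ k : ℕ, {r | f r ≤ -(k:ℝ)}) = ∅ := by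
      ext r
      simp only [Set.mem_iInter, Set.mem_setOf_eq, Set.mem_empty_iff_false, iff_false, not_forall]
      obtain ⟨k, hk⟩ := exists_nat_gt (-(f r))
      exact ⟨k, by push_neg; linarith⟩
    rw [hI, measure_empty] at h1
    have h2 : Tendsto (fun k : ℕ => Φ (-(k:ℝ))) atTop (𝓝 0) := by
      have h3 := (ENNReal.tendsto_toReal (by norm_num : (0:ENNReal) ≠ ⊤)).comp h1
      exact h3
    obtain ⟨k, hk⟩ := (h2.eventually (eventually_lt_nhds hβ.1)).exists
    refine ⟨-(k:ℝ), fun a ha => ?_⟩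
    by_contra hlt
    push_neg at hlt
    exact absurd (le_trans ha (hΦmono hlt.le)) (not_le.2 hk)
  -- α0 ∈ S, so β ≤ Φ α0
  have hmem : α0 ∈ S := by
    have hclosed : IsClosed S := isClosed_Ici.preimage hc
    exact hclosed.csInf_mem hS_ne hS_bdd
  -- Φ α0 ≤ β
  have hle : Φ α0 ≤ β := by
    have hforall : ∀ a ∈ Set.Iio α0, Φ a ≤ β := by
      intro a ha
      by_contra hgt
      push_neg at hgt
      exact absurd (csInf_le hS_bdd hgt.le) (not_le.2 ha)
    exact le_of_tendsto (hc.continuousAt.tendsto.mono_left nhdsWithin_le_nhds)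
      (eventually_nhdsWithin_of_forall hforall)
  have hQ : Φ α0 = β := le_antisymm hle hmem
  -- μ {f < α0} = β
  have hlt : (μ {r | f r < α0}).toReal = β := by
    have hmono : Monotone (fun k : ℕ => {r | f r ≤ α0 - 1/(k+1)}) := by
      intro i j hij r hr
      have h1 : (1:ℝ)/(j+1) ≤ 1/(i+1) := by
        apply one_div_le_one_div_of_le
        · positivity
        · have := (Nat.cast_le (α := ℝ)).2 hij; linarith
      simp only [Set.mem_setOf_eq] at hr ⊢
      linarith
    have h1 := tendsto_measure_iUnion_atTop (μ := μ) hmono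
    have hU : (⋃ k : ℕ, {r | f r ≤ α0 - 1/(k+1)}) = {r | f r < α0} := by
      ext r
      simp only [Set.mem_iUnion, Set.mem_setOf_eq]
      constructor
      · rintro ⟨k, hk⟩
        have : (0:ℝ) < 1/(k+1) := by positivity
        linarith
      · intro hr
        obtain ⟨k, hk⟩ := exists_nat_one_div_lt (by linarith : (0:ℝ) < α0 - f r)
        exact ⟨k, by linarith⟩
    rw [hU] at h1
    have h2 : Tendsto (fun k : ℕ => Φ (α0 - 1/(k+1))) atTop (𝓝 ((μ {r | f r < α0}).toReal)) :=
      (ENNReal.tendsto_toReal (measure_ne_top μ _)).comp h1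
    have h3 : Tendsto (fun k : ℕ => Φ (α0 - 1/(k+1))) atTop (𝓝 (Φ α0)) := by
      apply hc.continuousAt.tendsto.comp
      have h4 : Tendsto (fun k : ℕ => (1:ℝ)/(k+1)) atTop (𝓝 0) :=
        tendsto_one_div_add_atTop_nhds_zero_nat
      have h5 := tendsto_const_nhds.sub h4 (f := fun _ : ℕ => α0)
      simpa using h5
    exact (tendsto_nhds_unique h2 h3).trans hQ
  -- conclude
  have hset : {r | α0 ≤ f r} = {r | f r < α0}ᶜ := by
    ext r; simp [not_lt]
  have hcompl : μ ({r : Ω | f r < α0}ᶜ) = 1 - μ {r | f r < α0} := by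
    have hms : MeasurableSet {r : Ω | f r < α0} := hf measurableSet_Iio
    rw [measure_compl hms (measure_ne_top μ _), measure_univ]
  rw [hset, hcompl, ENNReal.toReal_sub_of_le prob_le_one (by norm_num), ENNReal.toReal_one, hlt]

lemma cvar_le (μ : Measure Ω) [IsProbabilityMeasure μ] (f : Ω → ℝ) (β : ℝ)
    (hβ : β ∈ Set.Ioo (0:ℝ) 1) (hf : Measurable f) (hfi : Integrable f μ)
    (hc : Continuous (fun a : ℝ => (μ {r | f r ≤ a}).toReal)) (α : ℝ) :
    (1 - β)⁻¹ * ∫ r in {r | sInf {a : ℝ | β ≤ (μ {r' | f r' ≤ a}).toReal} ≤ f r}, f r ∂μ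
      ≤ α + (1 - β)⁻¹ * ∫ r, max (f r - α) 0 ∂μ := by
  set α0 := sInf {a : ℝ | β ≤ (μ {r' | f r' ≤ a}).toReal} with hα0
  set C : Set Ω := {r | α0 ≤ f r} with hC
  have hCmeas : MeasurableSet C := hf measurableSet_Ici
  have hμC : (μ C).toReal = 1 - β := var_tail_measure μ f β hβ hf hc
  have hβ1 : (0:ℝ) < 1 - β := by linarith [hβ.2]
  have hg : Integrable (fun r => max (f r - α) 0) μ := (hfi.sub (integrable_const α)).pos_part
  have h1 : ∫ r in C, (f r - α) ∂μ = (∫ r in C, f r ∂μ) - (μ C).toReal * α := by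
    rw [integral_sub hfi.integrableOn (integrable_const α).integrableOn, setIntegral_const,
      smul_eq_mul, measureReal_def]
  have hb1 : ∫ r in C, (f r - α) ∂μ ≤ ∫ r in C, max (f r - α) 0 ∂μ :=
    setIntegral_mono_on ((hfi.sub (integrable_const α)).integrableOn) hg.integrableOn hCmeas
      (fun r _ => le_max_left _ _)
  have hb2 : ∫ r in C, max (f r - α) 0 ∂μ ≤ ∫ r, max (f r - α) 0 ∂μ :=
    setIntegral_le_integral hg (Filter.Eventually.of_forall fun r => le_max_right _ _)
  have key : ∫ r in C, f r ∂μ ≤ (1 - β) * α + ∫ r, max (f r - α) 0 ∂μ := by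
    have h3 := le_trans hb1 hb2
    rw [h1, hμC] at h3
    linarith
  have h4 := mul_le_mul_of_nonneg_left key (le_of_lt (inv_pos.2 hβ1))
  calc (1-β)⁻¹ * ∫ r in C, f r ∂μ
      ≤ (1-β)⁻¹ * ((1-β)*α + ∫ r, max (f r - α) 0 ∂μ) := h4
    _ = α + (1-β)⁻¹ * ∫ r, max (f r - α) 0 ∂μ := by
        rw [mul_add, ← mul_assoc, inv_mul_cancel₀ hβ1.ne', one_mul]

lemma cvar_eq (μ : Measure Ω) [IsProbabilityMeasure μ] (f : Ω → ℝ) (β : ℝ)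
    (hβ : β ∈ Set.Ioo (0:ℝ) 1) (hf : Measurable f) (hfi : Integrable f μ)
    (hc : Continuous (fun a : ℝ => (μ {r | f r ≤ a}).toReal)) :
    (1 - β)⁻¹ * ∫ r in {r | sInf {a : ℝ | β ≤ (μ {r' | f r' ≤ a}).toReal} ≤ f r}, f r ∂μ
      = sInf {a : ℝ | β ≤ (μ {r' | f r' ≤ a}).toReal}
        + (1 - β)⁻¹ * ∫ r, max (f r - sInf {a : ℝ | β ≤ (μ {r' | f r' ≤ a}).toReal}) 0 ∂μ := by
  set α0 := sInf {a : ℝ | β ≤ (μ {r' | f r' ≤ a}).toReal} with hα0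
  set C : Set Ω := {r | α0 ≤ f r} with hC
  have hCmeas : MeasurableSet C := hf measurableSet_Ici
  have hμC : (μ C).toReal = 1 - β := var_tail_measure μ f β hβ hf hc
  have hβ1 : (0:ℝ) < 1 - β := by linarith [hβ.2]
  have hg : Integrable (fun r => max (f r - α0) 0) μ := (hfi.sub (integrable_const α0)).pos_part
  have hsplit := integral_add_compl hCmeas hg
  have hz : ∫ r in Cᶜ, max (f r - α0) 0 ∂μ = 0 := by
    have h0 : Set.EqOn (fun r => max (f r - α0) 0) (fun _ => (0:ℝ)) Cᶜ := by
      intro r hr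
      simp only [hC, Set.mem_compl_iff, Set.mem_setOf_eq, not_le] at hr
      exact max_eq_right (by linarith)
    rw [setIntegral_congr_fun hCmeas.compl h0, integral_zero]
  have heq : ∫ r in C, max (f r - α0) 0 ∂μ = ∫ r in C, (f r - α0) ∂μ := by
    refine setIntegral_congr_fun hCmeas ?_
    intro r hr
    simp only [hC, Set.mem_setOf_eq] at hr
    exact max_eq_left (by linarith)
  have h1 : ∫ r in C, (f r - α0) ∂μ = (∫ r in C, f r ∂μ) - (μ C).toReal * α0 := by
    rw [integral_sub hfi.integrableOn (integrable_const α0).integrableOn, setIntegral_const,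
      smul_eq_mul, measureReal_def]
  have h2 : ∫ r, max (f r - α0) 0 ∂μ = (∫ r in C, f r ∂μ) - (1 - β) * α0 := by
    rw [← hsplit, hz, add_zero, heq, h1, hμC]
  rw [h2, mul_sub, ← mul_assoc, inv_mul_cancel₀ hβ1.ne', one_mul]
  ring

end CVaRHelpers

/-- For `X ⊆ ℝⁿ` and `β ∈ (0,1)`, with `L w` measurable and integrable and
`Φ(w,·)` continuous for every `w ∈ X`, minimizing CVaR over `X` is equivalent to jointly
minimizing `F_β` over `X × ℝ`:
`inf_{w ∈ X} φ_β(w) = inf_{(w,α) ∈ X × ℝ} F_β(w,α)`, where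
`φ_β(w) = (1-β)⁻¹ ∫_{L(w,r) ≥ VaR_β(w)} L w r ∂μ` and
`VaR_β(w) = min {α | Φ(w,α) ≥ β}` (expressed as `sInf`). -/
theorem stmt_6 {n : ℕ} (μ : Measure (Fin n → ℝ)) [IsProbabilityMeasure μ]
    (L : (Fin n → ℝ) → (Fin n → ℝ) → ℝ) (X : Set (Fin n → ℝ)) (β : ℝ)
    (hβ : β ∈ Set.Ioo (0 : ℝ) 1)
    (hmeas : ∀ w ∈ X, Measurable (L w)) (hint : ∀ w ∈ X, Integrable (L w) μ)
    (hcont : ∀ w ∈ X, Continuous (fun α : ℝ => (μ {r | L w r ≤ α}).toReal)) :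
    sInf {y : ℝ | ∃ w ∈ X,
        y = (1 - β)⁻¹ *
          ∫ r in {r | sInf {a : ℝ | β ≤ (μ {r' | L w r' ≤ a}).toReal} ≤ L w r},
            L w r ∂μ}
    = sInf {y : ℝ | ∃ w ∈ X, ∃ α : ℝ,
        y = α + (1 - β)⁻¹ * ∫ r, max (L w r - α) 0 ∂μ} := by
  apply sInf_eq_of_subset_of_dominates
  · rintro y ⟨w, hw, rfl⟩
    exact ⟨w, hw, sInf {a : ℝ | β ≤ (μ {r' | L w r' ≤ a}).toReal},
      cvar_eq μ (L w) β hβ (hmeas w hw) (hint w hw) (hcont w hw)⟩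
  · rintro b ⟨w, hw, α, rfl⟩
    exact ⟨_, ⟨w, hw, rfl⟩, cvar_le μ (L w) β hβ (hmeas w hw) (hint w hw) (hcont w hw) α⟩
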